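/- For r, s > 0, the maximum of 2√r·|u| - 2(√(r+s) - √s)·|v + √(r+s)| over pairs (u,v) with u² + v² = 1 equals 2√r·√(1-r-s) if 2(1-r-s)(r+s-√s·√(r+s)) > r, and equals 2√(2(r+s-√s·√(r+s))) - 2(r+s-√s·√(r+s)) if 2(1-r-s)(r+s-√s·√(r+s)) ≤ r. -/
import Mathlib

set_option maxHeartbeats 1000000

private lemma aux_sqle {x y : ℝ} (hx : 0 ≤ x) (hy : 0 ≤ y) (h : x ^ 2 ≤ y ^ 2) :
    x ≤ y := by nlinarith

private lemma aux_b2C {B C : ℝ} (hB : 0 < B) (hC : 0 < C) (hb : 0 < C - B)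
    (h' : 2 * (1 - C ^ 2) * (C * (C - B)) ≤ (C + B) * (C - B)) :
    C - B ≤ 2 * C ^ 3 := by
  nlinarith [mul_pos hC hb]

private lemma aux_ub1a (A b W C p v : ℝ) (hA : 0 < A) (hb : 0 < b) (hW : 0 < W)
    (hC : 0 < C) (hWC : W ^ 2 + C ^ 2 = 1) (hp : 0 ≤ p) (hp2 : p ^ 2 + v ^ 2 = 1)
    (key : A * C ≤ b * W) (hv : 0 ≤ v + C) :
    2 * A * p - 2 * b * (v + C) ≤ 2 * A * W := by
  rcases le_or_gt C v with hvC | hvC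
  · have hv2 : C ^ 2 ≤ v ^ 2 := by nlinarith
    have hpw : p ≤ W := aux_sqle hp hW.le (by nlinarith)
    nlinarith [mul_le_mul_of_nonneg_left hpw hA.le, mul_nonneg hb.le hv]
  · have hv2 : v ^ 2 ≤ C ^ 2 := by nlinarith
    have hWp : W ≤ p := aux_sqle hW.le hp (by nlinarith)
    have h3 : A * (C - v) ≤ b * (W + p) := by
      rcases le_or_gt v 0 with hv0 | hv0
      · have h4 : A * (-v) ≤ A * C := by nlinarith
        have h5 : b * W ≤ b * p := by nlinarith
        nlinarith
      · nlinarith [mul_nonneg hb.le hp, mul_nonneg hA.le hv0.le]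
    have h6 : A * (C - v) * (C + v) ≤ b * (W + p) * (C + v) :=
      mul_le_mul_of_nonneg_right h3 (by linarith)
    nlinarith [h6, (show (0:ℝ) < W + p by linarith)]

private lemma aux_ub1b (A b W C p v : ℝ) (hA : 0 < A) (hb : 0 < b) (hW : 0 < W)
    (hC : 0 < C) (hWC : W ^ 2 + C ^ 2 = 1) (hp : 0 ≤ p) (hp2 : p ^ 2 + v ^ 2 = 1)
    (hv : v + C ≤ 0) :
    2 * A * p + 2 * b * (v + C) ≤ 2 * A * W := by
  have hv2 : C ^ 2 ≤ v ^ 2 := by nlinarith [mul_nonneg (neg_nonneg.2 hv) (show (0:ℝ) ≤ C - v by nlinarith)]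
  have hpw : p ≤ W := aux_sqle hp hW.le (by nlinarith)
  nlinarith [mul_le_mul_of_nonneg_left hpw hA.le, mul_nonpos_of_nonneg_of_nonpos hb.le hv]

private lemma aux_ub2a (A b S C p v : ℝ) (hA : 0 < A) (hb : 0 < b) (hS : 0 < S)
    (hC : 0 < C) (hS2 : S ^ 2 = A ^ 2 + b ^ 2) (hS2' : S ^ 2 = 2 * (b * C))
    (hp : 0 ≤ p) (hp2 : p ^ 2 + v ^ 2 = 1) (hv : 0 ≤ v + C) :
    2 * A * p - 2 * b * (v + C) ≤ 2 * S - S ^ 2 := by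
  have cauchy : A * p - b * v ≤ S := by
    rcases le_or_gt (A * p - b * v) 0 with hX | hX
    · linarith
    · exact aux_sqle hX.le hS.le (by nlinarith [sq_nonneg (A * v + b * p)])
  linarith [cauchy]

private lemma aux_ub2b (A b S C p v : ℝ) (hA : 0 < A) (hb : 0 < b) (hS : 0 < S)
    (hC : 0 < C) (hS2 : S ^ 2 = A ^ 2 + b ^ 2) (hS2' : S ^ 2 = 2 * (b * C))
    (hp : 0 ≤ p) (hp2 : p ^ 2 + v ^ 2 = 1) (hv : v + C ≤ 0) :
    2 * A * p + 2 * b * (v + C) ≤ 2 * S - S ^ 2 := by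
  have hv1 : -1 ≤ v := by nlinarith
  have hC1 : C ≤ 1 := by linarith
  set W := Real.sqrt (1 - C ^ 2) with hWdef
  have hW2 : W ^ 2 = 1 - C ^ 2 := Real.sq_sqrt (by nlinarith)
  have hW : 0 ≤ W := Real.sqrt_nonneg _
  have hv2 : C ^ 2 ≤ v ^ 2 := by nlinarith [mul_nonneg (neg_nonneg.2 hv) (show (0:ℝ) ≤ C - v by nlinarith)]
  have hpW : p ≤ W := aux_sqle hp hW (by nlinarith)
  have cauchy : A * W + b * C ≤ S := by
    have hX : 0 ≤ A * W + b * C := by positivity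
    exact aux_sqle hX hS.le (by nlinarith [sq_nonneg (A * C - b * W)])
  nlinarith [mul_le_mul_of_nonneg_left hpW hA.le,
    mul_nonpos_of_nonneg_of_nonpos hb.le hv]

theorem opt5 (r s : ℝ) (hr : 0 < r) (hs : 0 < s) :
    (2 * (1 - r - s) * (r + s - Real.sqrt s * Real.sqrt (r + s)) > r →
      IsGreatest
        {y : ℝ | ∃ u v : ℝ, u ^ 2 + v ^ 2 = 1 ∧
          y = 2 * Real.sqrt r * |u|
              - 2 * (Real.sqrt (r + s) - Real.sqrt s) * |v + Real.sqrt (r + s)|}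
        (2 * Real.sqrt r * Real.sqrt (1 - r - s))) ∧
    (2 * (1 - r - s) * (r + s - Real.sqrt s * Real.sqrt (r + s)) ≤ r →
      IsGreatest
        {y : ℝ | ∃ u v : ℝ, u ^ 2 + v ^ 2 = 1 ∧
          y = 2 * Real.sqrt r * |u|
              - 2 * (Real.sqrt (r + s) - Real.sqrt s) * |v + Real.sqrt (r + s)|}
        (2 * Real.sqrt (2 * (r + s - Real.sqrt s * Real.sqrt (r + s)))
          - 2 * (r + s - Real.sqrt s * Real.sqrt (r + s)))) := by
  set A := Real.sqrt r with hAdef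
  set B := Real.sqrt s with hBdef
  set C := Real.sqrt (r + s) with hCdef
  have hA2 : A ^ 2 = r := Real.sq_sqrt hr.le
  have hB2 : B ^ 2 = s := Real.sq_sqrt hs.le
  have hC2 : C ^ 2 = r + s := Real.sq_sqrt (by linarith)
  have hA : 0 < A := Real.sqrt_pos.2 hr
  have hB : 0 < B := Real.sqrt_pos.2 hs
  have hC : 0 < C := Real.sqrt_pos.2 (by linarith)
  have hBC : B < C := by nlinarith
  have hb : 0 < C - B := by linarith
  have he : r + s - B * C = C * (C - B) := by nlinarith
  have h2e : 2 * (C * (C - B)) = A ^ 2 + (C - B) ^ 2 := by nlinarith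
  constructor
  · intro h
    rw [he] at h
    have h1 : 0 < 1 - r - s := by nlinarith [mul_pos hC hb]
    set W := Real.sqrt (1 - r - s) with hWdef
    have hW2 : W ^ 2 = 1 - r - s := Real.sq_sqrt h1.le
    have hW : 0 < W := Real.sqrt_pos.2 h1
    have hWC : W ^ 2 + C ^ 2 = 1 := by rw [hW2, hC2]; ring
    have key : A * C < (C - B) * W := by
      nlinarith [mul_pos hA hC, mul_pos hb hW, sq_nonneg (A * C - (C - B) * W),
        sq_nonneg (A * C + (C - B) * W)]
    constructor
    · refine ⟨W, -C, by nlinarith, ?_⟩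
      rw [abs_of_nonneg hW.le]
      simp
    · rintro y ⟨u, v, huv, rfl⟩
      have hp2 : |u| ^ 2 + v ^ 2 = 1 := by rw [sq_abs]; exact huv
      have hp : 0 ≤ |u| := abs_nonneg u
      rcases abs_cases (v + C) with ⟨hq, hvs⟩ | ⟨hq, hvs⟩ <;> rw [hq]
      · exact aux_ub1a A (C - B) W C |u| v hA hb hW hC hWC hp hp2 key.le hvs
      · have := aux_ub1b A (C - B) W C |u| v hA hb hW hC hWC hp hp2 hvs.le
        linarith
  · intro h
    set S := Real.sqrt (2 * (r + s - B * C)) with hSdef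
    have hepos : 0 < r + s - B * C := by rw [he]; positivity
    have hS2 : S ^ 2 = 2 * (r + s - B * C) := Real.sq_sqrt (by linarith)
    have hS : 0 < S := Real.sqrt_pos.2 (by linarith)
    have hS2' : S ^ 2 = A ^ 2 + (C - B) ^ 2 := by rw [hS2, he]; linarith [h2e]
    have hS2'' : S ^ 2 = 2 * ((C - B) * C) := by rw [hS2, he]; ring
    have hbS : C - B ≤ C * S := by
      have h2C : C - B ≤ 2 * C ^ 3 := by
        rcases le_or_gt 1 C with h1C | h1C
        · have h4 : 0 ≤ C * ((C - 1) * (C + 1)) :=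
            mul_nonneg hC.le (mul_nonneg (by linarith) (by linarith))
          nlinarith [h4, pow_nonneg hC.le 3]
        · have e1 : (C + B) * (C - B) = r := by linear_combination hC2 - hB2
          have e2 : 1 - C ^ 2 = 1 - r - s := by rw [hC2]; ring
          have h' : 2 * (1 - C ^ 2) * (C * (C - B)) ≤ (C + B) * (C - B) := by
            rw [e2, e1, ← he]; exact h
          exact aux_b2C hB hC hb h'
      have hCS : (C * S) ^ 2 = 2 * (C - B) * C ^ 3 := by rw [mul_pow, hS2'']; ring
      exact aux_sqle hb.le (mul_pos hC hS).le
        (by linarith [hCS, mul_le_mul_of_nonneg_left h2C hb.le])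
    constructor
    · refine ⟨A / S, -((C - B) / S), ?_, ?_⟩
      · field_simp
        linarith [hS2']
      · have hu : |A / S| = A / S := abs_of_pos (by positivity)
        have hvq : -((C - B) / S) + C = C - (C - B) / S := by ring
        rw [hu, hvq, abs_of_nonneg (by rw [sub_nonneg, div_le_iff₀ hS]; linarith)]
        have hSS : S * S⁻¹ = 1 := mul_inv_cancel₀ hS.ne'
        linear_combination (2 / S) * hS2' + hS2 - hS2'' - (2 * S) * hSS
    · rintro y ⟨u, v, huv, rfl⟩
      have hp2 : |u| ^ 2 + v ^ 2 = 1 := by rw [sq_abs]; exact huv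
      have hp : 0 ≤ |u| := abs_nonneg u
      rcases abs_cases (v + C) with ⟨hq, hvs⟩ | ⟨hq, hvs⟩ <;> rw [hq]
      · have := aux_ub2a A (C - B) S C |u| v hA hb hS hC hS2' hS2'' hp hp2 hvs
        linarith
      · have := aux_ub2b A (C - B) S C |u| v hA hb hS hC hS2' hS2'' hp hp2 hvs.le
        linarith
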